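/- The group Sp(2g,ℤ) acts transitively on the set of even characteristics in (ℤ/2ℤ)^g × (ℤ/2ℤ)^g via the affine action (ε,δ) ↦ (dε − cδ + diag(cᵗd), −bε + aδ + diag(aᵗb)) mod 2. -/
import Mathlib

open scoped Matrix

/-- The standard affine action of an integral symplectic matrix
`M = (a b; c d)` on theta characteristics:
`(ε, δ) ↦ (dε − cδ + diag(cᵗd), −bε + aδ + diag(aᵗb))  (mod 2)`. -/
def charAction {g : ℕ} (M : Matrix (Fin g ⊕ Fin g) (Fin g ⊕ Fin g) ℤ)
    (ε δ : Fin g → ZMod 2) : (Fin g → ZMod 2) × (Fin g → ZMod 2) :=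
  let a := M.toBlocks₁₁
  let b := M.toBlocks₁₂
  let c := M.toBlocks₂₁
  let d := M.toBlocks₂₂
  ((d.map (Int.cast : ℤ → ZMod 2)).mulVec ε -
      (c.map (Int.cast : ℤ → ZMod 2)).mulVec δ +
      fun i => (((c * dᵀ) i i : ℤ) : ZMod 2),
    -(b.map (Int.cast : ℤ → ZMod 2)).mulVec ε +
      (a.map (Int.cast : ℤ → ZMod 2)).mulVec δ +
      fun i => (((a * bᵀ) i i : ℤ) : ZMod 2))

namespace ThetaChar

open Matrix Finset

variable {g : ℕ}


variable {g : ℕ}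

def m2 (X : Matrix (Fin g) (Fin g) ℤ) : Matrix (Fin g) (Fin g) (ZMod 2) :=
  X.map (Int.cast : ℤ → ZMod 2)

def dv (X : Matrix (Fin g) (Fin g) (ZMod 2)) : Fin g → ZMod 2 := fun i => X i i

lemma negv (x : Fin g → ZMod 2) : -x = x :=
  funext fun i => show -(x i) = x i from (by decide : ∀ a : ZMod 2, -a = a) _

lemma addself (x : Fin g → ZMod 2) : x + x = 0 :=
  funext fun i => show x i + x i = 0 from (by decide : ∀ a : ZMod 2, a + a = 0) _

lemma maddself (X : Matrix (Fin g) (Fin g) (ZMod 2)) : X + X = 0 := by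
  ext i j; have : ∀ a : ZMod 2, a + a = 0 := by decide
  exact this (X i j)

lemma m2_mul (X Y : Matrix (Fin g) (Fin g) ℤ) : m2 (X * Y) = m2 X * m2 Y :=
  Matrix.map_mul (f := Int.castRingHom (ZMod 2))

lemma m2_add (X Y : Matrix (Fin g) (Fin g) ℤ) : m2 (X + Y) = m2 X + m2 Y := by
  ext i j; simp [m2]

lemma m2_transpose (X : Matrix (Fin g) (Fin g) ℤ) : m2 Xᵀ = (m2 X)ᵀ := rfl

lemma m2_one : m2 (1 : Matrix (Fin g) (Fin g) ℤ) = 1 :=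
  Matrix.map_one _ (by simp) (by simp)

lemma dv_sym (u v : Matrix (Fin g) (Fin g) ℤ) (h : u * vᵀ = v * uᵀ) :
    (m2 (u * vᵀ))ᵀ = m2 (u * vᵀ) := by
  rw [← m2_transpose, Matrix.transpose_mul, Matrix.transpose_transpose, ← h]

/-- key mod-2 identity: `diag (x s xᵀ) = x ⬝ diag s` for symmetric `s`. -/
lemma dv_conj (x s : Matrix (Fin g) (Fin g) (ZMod 2)) (hs : sᵀ = s) :
    dv (x * s * xᵀ) = x.mulVec (dv s) := by
  funext i
  have hsym : ∀ k l, s k l = s l k := fun k l => congrFun (congrFun hs l) k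
  show (x * s * xᵀ) i i = ∑ k, x i k * s k k
  have expand : (x * s * xᵀ) i i = ∑ p ∈ univ ×ˢ univ, x i p.1 * s p.1 p.2 * x i p.2 := by
    rw [Finset.sum_product]
    simp only [Matrix.mul_apply, transpose_apply, Finset.sum_mul]
    rw [Finset.sum_comm]
  rw [expand, ← Finset.diag_union_offDiag (univ : Finset (Fin g)),
    Finset.sum_union (Finset.disjoint_diag_offDiag _)]
  have h1 : ∑ p ∈ (univ : Finset (Fin g)).diag, x i p.1 * s p.1 p.2 * x i p.2
      = ∑ k, x i k * s k k := by
    rw [Finset.sum_diag]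
    congr 1; funext k; have : ∀ a b : ZMod 2, a * b * a = a * b := by decide
    exact this _ _
  have h2 : ∑ p ∈ (univ : Finset (Fin g)).offDiag, x i p.1 * s p.1 p.2 * x i p.2 = 0 := by
    apply Finset.sum_involution (fun p _ => (p.2, p.1))
    · intro p hp
      have e : x i p.2 * s p.2 p.1 * x i p.1 = x i p.1 * s p.1 p.2 * x i p.2 := by
        rw [hsym p.2 p.1]; ring
      rw [e]
      exact (by decide : ∀ a : ZMod 2, a + a = 0) _
    · intro p hp _
      have hne := (Finset.mem_offDiag.mp hp).2.2
      intro hcontra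
      exact hne (congrArg Prod.snd hcontra ▸ (congrArg Prod.fst hcontra).symm ▸ rfl)
    · intro p hp
      have h := Finset.mem_offDiag.mp hp
      exact Finset.mem_offDiag.mpr ⟨h.2.1, h.1, fun e => h.2.2 e.symm⟩
    · intro p hp; rfl
  rw [h1, h2, add_zero]

lemma const_key (u v a2 b2 c2 d2 : Matrix (Fin g) (Fin g) ℤ)
    (hab2 : a2 * b2ᵀ = b2 * a2ᵀ) (hcd2 : c2 * d2ᵀ = d2 * c2ᵀ)
    (hdet2 : a2 * d2ᵀ - b2 * c2ᵀ = 1) :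
    dv (m2 ((u * a2 + v * c2) * (u * b2 + v * d2)ᵀ)) =
      (m2 v).mulVec (dv (m2 (c2 * d2ᵀ))) + (m2 u).mulVec (dv (m2 (a2 * b2ᵀ)))
        + dv (m2 (u * vᵀ)) := by
  have expand : (u * a2 + v * c2) * (u * b2 + v * d2)ᵀ =
      u * (a2 * b2ᵀ) * uᵀ + v * (c2 * d2ᵀ) * vᵀ
        + (u * (a2 * d2ᵀ) * vᵀ + v * (c2 * b2ᵀ) * uᵀ) := by
    simp only [Matrix.transpose_add, Matrix.transpose_mul, Matrix.add_mul, Matrix.mul_add,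
      Matrix.mul_assoc]
    abel
  rw [expand]
  have cross : dv (m2 (u * (a2 * d2ᵀ) * vᵀ + v * (c2 * b2ᵀ) * uᵀ)) = dv (m2 (u * vᵀ)) := by
    have tr : v * (c2 * b2ᵀ) * uᵀ = (u * (b2 * c2ᵀ) * vᵀ)ᵀ := by
      simp only [Matrix.transpose_mul, Matrix.transpose_transpose, Matrix.mul_assoc]
    have dvtr : dv (m2 (v * (c2 * b2ᵀ) * uᵀ)) = dv (m2 (u * (b2 * c2ᵀ) * vᵀ)) := by
      rw [tr, m2_transpose]; rfl
    rw [m2_add]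
    show dv (m2 (u * (a2 * d2ᵀ) * vᵀ)) + dv (m2 (v * (c2 * b2ᵀ) * uᵀ)) = dv (m2 (u * vᵀ))
    rw [dvtr]
    have sum_eq : u * (a2 * d2ᵀ) * vᵀ + u * (b2 * c2ᵀ) * vᵀ
        = u * vᵀ + (u * (b2 * c2ᵀ) * vᵀ + u * (b2 * c2ᵀ) * vᵀ) := by
      have had : a2 * d2ᵀ = 1 + b2 * c2ᵀ + (b2 * c2ᵀ - b2 * c2ᵀ) := by rw [← hdet2]; abel
      rw [had]
      simp only [Matrix.mul_add, Matrix.add_mul, Matrix.mul_one, Matrix.one_mul, sub_self,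
        Matrix.mul_zero, Matrix.zero_mul, add_zero]
      abel
    show dv (m2 (u * (a2 * d2ᵀ) * vᵀ) + m2 (u * (b2 * c2ᵀ) * vᵀ)) = dv (m2 (u * vᵀ))
    rw [← m2_add, sum_eq, m2_add, m2_add, maddself, add_zero]
  have t1 : dv (m2 (u * (a2 * b2ᵀ) * uᵀ)) = (m2 u).mulVec (dv (m2 (a2 * b2ᵀ))) := by
    rw [m2_mul, m2_mul, m2_transpose]
    exact dv_conj _ _ (dv_sym a2 b2 hab2)
  have t2 : dv (m2 (v * (c2 * d2ᵀ) * vᵀ)) = (m2 v).mulVec (dv (m2 (c2 * d2ᵀ))) := by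
    rw [m2_mul, m2_mul, m2_transpose]
    exact dv_conj _ _ (dv_sym c2 d2 hcd2)
  rw [m2_add, m2_add]
  show dv (m2 (u * (a2 * b2ᵀ) * uᵀ)) + dv (m2 (v * (c2 * d2ᵀ) * vᵀ))
      + dv (m2 (u * (a2 * d2ᵀ) * vᵀ + v * (c2 * b2ᵀ) * uᵀ)) = _
  rw [t1, t2, cross]
  abel


lemma sp_rel {a b c d : Matrix (Fin g) (Fin g) ℤ}
    (hM : Matrix.fromBlocks a b c d ∈ Matrix.symplecticGroup (Fin g) ℤ) :
    a * bᵀ = b * aᵀ ∧ c * dᵀ = d * cᵀ ∧ a * dᵀ - b * cᵀ = 1 := by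
  rw [SymplecticGroup.mem_iff] at hM
  rw [Matrix.J, fromBlocks_multiply, fromBlocks_transpose, fromBlocks_multiply] at hM
  have e11 := congrArg Matrix.toBlocks₁₁ hM
  have e12 := congrArg Matrix.toBlocks₁₂ hM
  have e22 := congrArg Matrix.toBlocks₂₂ hM
  simp only [toBlocks_fromBlocks₁₁, toBlocks_fromBlocks₁₂, toBlocks_fromBlocks₂₂] at e11 e12 e22
  simp only [Matrix.mul_zero, Matrix.mul_one, Matrix.mul_neg, zero_add, add_zero,
    Matrix.zero_mul, Matrix.one_mul, Matrix.neg_mul] at e11 e12 e22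
  refine ⟨?_, ?_, ?_⟩
  · rw [add_neg_eq_zero] at e11; exact e11.symm
  · rw [add_neg_eq_zero] at e22; exact e22.symm
  · have h : a * dᵀ - b * cᵀ = -(b * cᵀ + -(a * dᵀ)) := by abel
    rw [h, e12, neg_neg]

lemma charAction_fromBlocks (a b c d : Matrix (Fin g) (Fin g) ℤ) (ε δ : Fin g → ZMod 2) :
    charAction (Matrix.fromBlocks a b c d) ε δ =
      ((m2 d).mulVec ε - (m2 c).mulVec δ + dv (m2 (c * dᵀ)),
        -((m2 b).mulVec ε) + (m2 a).mulVec δ + dv (m2 (a * bᵀ))) := by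
  simp only [charAction, toBlocks_fromBlocks₁₁, toBlocks_fromBlocks₁₂,
    toBlocks_fromBlocks₂₁, toBlocks_fromBlocks₂₂]
  rfl

lemma m2_zero : m2 (0 : Matrix (Fin g) (Fin g) ℤ) = 0 := by ext i j; simp [m2]

lemma dv_zero : dv (0 : Matrix (Fin g) (Fin g) (ZMod 2)) = 0 := rfl

lemma charAction_one (ε δ : Fin g → ZMod 2) : charAction 1 ε δ = (ε, δ) := by
  rw [← fromBlocks_one, charAction_fromBlocks]
  simp [m2_one, m2_zero, dv_zero, negv, Matrix.zero_mulVec]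

theorem cocycle (M N : Matrix (Fin g ⊕ Fin g) (Fin g ⊕ Fin g) ℤ)
    (hN : N ∈ Matrix.symplecticGroup (Fin g) ℤ) (ε δ : Fin g → ZMod 2) :
    charAction (M * N) ε δ = charAction M (charAction N ε δ).1 (charAction N ε δ).2 := by
  obtain ⟨a1, b1, c1, d1, rfl⟩ : ∃ a b c d, M = fromBlocks a b c d :=
    ⟨_, _, _, _, (fromBlocks_toBlocks M).symm⟩
  obtain ⟨a2, b2, c2, d2, rfl⟩ : ∃ a b c d, N = fromBlocks a b c d :=
    ⟨_, _, _, _, (fromBlocks_toBlocks N).symm⟩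
  obtain ⟨hab, hcd, hdet⟩ := sp_rel hN
  rw [fromBlocks_multiply, charAction_fromBlocks, charAction_fromBlocks, charAction_fromBlocks]
  refine Prod.ext ?_ ?_
  · show (m2 (c1 * b2 + d1 * d2)).mulVec ε - (m2 (c1 * a2 + d1 * c2)).mulVec δ
        + dv (m2 ((c1 * a2 + d1 * c2) * (c1 * b2 + d1 * d2)ᵀ)) = _
    rw [const_key c1 d1 a2 b2 c2 d2 hab hcd hdet]
    simp only [m2_add, m2_mul, Matrix.add_mulVec, Matrix.mulVec_add, Matrix.mulVec_sub,
      Matrix.mulVec_neg, ← Matrix.mulVec_mulVec, sub_eq_add_neg, negv]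
    abel
  · show -(m2 (a1 * b2 + b1 * d2)).mulVec ε + (m2 (a1 * a2 + b1 * c2)).mulVec δ
        + dv (m2 ((a1 * a2 + b1 * c2) * (a1 * b2 + b1 * d2)ᵀ)) = _
    rw [const_key a1 b1 a2 b2 c2 d2 hab hcd hdet]
    simp only [m2_add, m2_mul, Matrix.add_mulVec, Matrix.mulVec_add, Matrix.mulVec_sub,
      Matrix.mulVec_neg, ← Matrix.mulVec_mulVec, sub_eq_add_neg, negv]
    abel

end ThetaChar

namespace ThetaChar

open Matrix Finset

variable {g : ℕ}

/-- reachability by the symplectic action -/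
def Rel (x y : (Fin g → ZMod 2) × (Fin g → ZMod 2)) : Prop :=
  ∃ M ∈ Matrix.symplecticGroup (Fin g) ℤ, charAction M x.1 x.2 = y

lemma Rel.rfl (x : (Fin g → ZMod 2) × (Fin g → ZMod 2)) : Rel x x :=
  ⟨1, one_mem _, by rw [charAction_one]⟩

lemma Rel.trans {x y z : (Fin g → ZMod 2) × (Fin g → ZMod 2)} (h1 : Rel x y) (h2 : Rel y z) :
    Rel x z := by
  obtain ⟨M, hM, e⟩ := h1
  obtain ⟨N, hN, f⟩ := h2
  exact ⟨N * M, mul_mem hN hM, by rw [cocycle N M hM, e]; exact f⟩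

lemma Rel.symm {x y : (Fin g → ZMod 2) × (Fin g → ZMod 2)} (h : Rel x y) : Rel y x := by
  obtain ⟨M, hM, e⟩ := h
  set J2 := Matrix.J (Fin g) ℤ with hJ2
  refine ⟨-J2 * Mᵀ * J2, mul_mem (mul_mem (SymplecticGroup.neg_mem (SymplecticGroup.J_mem _ _))
    (SymplecticGroup.transpose_mem hM)) (SymplecticGroup.J_mem _ _), ?_⟩
  have hprod : -J2 * Mᵀ * J2 * M = 1 := by
    have h1 := SymplecticGroup.inv_left_mul_aux hM
    calc -J2 * Mᵀ * J2 * M = -(J2 * Mᵀ * J2 * M) := by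
          simp only [Matrix.neg_mul]
      _ = 1 := h1
  calc charAction (-J2 * Mᵀ * J2) y.1 y.2
      = charAction (-J2 * Mᵀ * J2) (charAction M x.1 x.2).1
          (charAction M x.1 x.2).2 := by rw [e]
    _ = charAction (-J2 * Mᵀ * J2 * M) x.1 x.2 := (cocycle _ M hM x.1 x.2).symm
    _ = x := by rw [hprod, charAction_one]

lemma genA_mem (b : Matrix (Fin g) (Fin g) ℤ) (hb : bᵀ = b) :
    Matrix.fromBlocks 1 b 0 1 ∈ Matrix.symplecticGroup (Fin g) ℤ := by
  rw [SymplecticGroup.mem_iff, Matrix.J, fromBlocks_transpose, fromBlocks_multiply,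
    fromBlocks_multiply]
  simp [hb]

lemma genB_mem (c : Matrix (Fin g) (Fin g) ℤ) (hc : cᵀ = c) :
    Matrix.fromBlocks 1 0 c 1 ∈ Matrix.symplecticGroup (Fin g) ℤ := by
  rw [SymplecticGroup.mem_iff, Matrix.J, fromBlocks_transpose, fromBlocks_multiply,
    fromBlocks_multiply]
  simp [hc]

/-- lift a mod-2 symmetric matrix to a symmetric integer matrix -/
lemma lift_sym (s : Matrix (Fin g) (Fin g) (ZMod 2)) (hs : sᵀ = s) :
    ∃ b : Matrix (Fin g) (Fin g) ℤ, bᵀ = b ∧ m2 b = s := by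
  refine ⟨Matrix.of fun i j => ((s i j).val : ℤ), ?_, ?_⟩
  · ext i j
    show ((s j i).val : ℤ) = ((s i j).val : ℤ)
    rw [show s j i = s i j from congrFun (congrFun hs.symm j) i]
  · ext i j
    show (((s i j).val : ℤ) : ZMod 2) = s i j
    simp [ZMod.natCast_val, ZMod.cast_id]

lemma moveA (s : Matrix (Fin g) (Fin g) (ZMod 2)) (hs : sᵀ = s) (ε δ : Fin g → ZMod 2) :
    Rel (ε, δ) (ε, δ + s.mulVec ε + dv s) := by
  obtain ⟨b, hb, hm⟩ := lift_sym s hs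
  refine ⟨Matrix.fromBlocks 1 b 0 1, genA_mem b hb, ?_⟩
  rw [charAction_fromBlocks]
  refine Prod.ext ?_ ?_
  · show m2 1 *ᵥ ε - m2 0 *ᵥ δ + dv (m2 (0 * 1ᵀ)) = ε
    rw [m2_one, Matrix.one_mulVec, m2_zero, Matrix.zero_mulVec, Matrix.zero_mul, m2_zero,
      dv_zero, sub_zero, add_zero]
  · show -(m2 b *ᵥ ε) + m2 1 *ᵥ δ + dv (m2 (1 * bᵀ)) = δ + s *ᵥ ε + dv s
    rw [m2_one, Matrix.one_mulVec, Matrix.one_mul, m2_transpose, hm, negv]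
    show s *ᵥ ε + δ + dv sᵀ = δ + s *ᵥ ε + dv s
    rw [hs]; abel

lemma moveB (s : Matrix (Fin g) (Fin g) (ZMod 2)) (hs : sᵀ = s) (ε δ : Fin g → ZMod 2) :
    Rel (ε, δ) (ε + s.mulVec δ + dv s, δ) := by
  obtain ⟨c, hc, hm⟩ := lift_sym s hs
  refine ⟨Matrix.fromBlocks 1 0 c 1, genB_mem c hc, ?_⟩
  rw [charAction_fromBlocks]
  refine Prod.ext ?_ ?_
  · show m2 1 *ᵥ ε - m2 c *ᵥ δ + dv (m2 (c * 1ᵀ)) = ε + s *ᵥ δ + dv s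
    rw [m2_one, Matrix.one_mulVec, Matrix.transpose_one, Matrix.mul_one, hm, sub_eq_add_neg,
      negv]
  · show -(m2 0 *ᵥ ε) + m2 1 *ᵥ δ + dv (m2 (1 * 0ᵀ)) = δ
    rw [m2_one, Matrix.one_mulVec, m2_zero, Matrix.zero_mulVec, neg_zero, zero_add,
      Matrix.one_mul]
    show δ + dv (m2 0ᵀ) = δ
    rw [Matrix.transpose_zero, m2_zero, dv_zero, add_zero]

end ThetaChar

namespace ThetaChar

open Matrix Finset

variable {g : ℕ}

lemma sum_single_mul (w : Fin g → ZMod 2) (j : Fin g) :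
    ∑ i, (Pi.single j 1 : Fin g → ZMod 2) i * w i = w j := by
  rw [Finset.sum_eq_single j] <;> simp +contextual [Pi.single_apply]

lemma sum_mul_single (w : Fin g → ZMod 2) (j : Fin g) :
    ∑ i, w i * (Pi.single j 1 : Fin g → ZMod 2) i = w j := by
  rw [Finset.sum_eq_single j] <;> simp +contextual [Pi.single_apply]

lemma vecMulVec_mulVec' (u v w : Fin g → ZMod 2) :
    (Matrix.vecMulVec u v).mulVec w = (∑ k, v k * w k) • u := by
  funext i
  show ∑ k, (u i * v k) * w k = (∑ k, v k * w k) * u i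
  rw [Finset.sum_mul]
  congr 1; funext k; ring

lemma diagonal_single_mulVec (w : Fin g → ZMod 2) (j : Fin g) :
    (Matrix.diagonal (Pi.single j 1 : Fin g → ZMod 2)).mulVec w = Pi.single j (w j) := by
  funext i
  rw [Matrix.mulVec_diagonal]
  rcases eq_or_ne i j with rfl | hne
  · simp
  · simp [Pi.single_eq_of_ne hne]

lemma dv_diagonal (w : Fin g → ZMod 2) : dv (Matrix.diagonal w) = w :=
  funext fun i => Matrix.diagonal_apply_eq w i

/-- kill `ε` when `δ = 0` -/
lemma red_right_zero (ε : Fin g → ZMod 2) : Rel (ε, 0) ((0 : Fin g → ZMod 2), 0) := by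
  have h := moveB (Matrix.diagonal ε) (Matrix.diagonal_transpose ε) ε 0
  rwa [Matrix.mulVec_zero, add_zero, dv_diagonal, addself] at h

/-- kill `δ` when `ε = 0` -/
lemma red_left_zero (δ : Fin g → ZMod 2) : Rel ((0 : Fin g → ZMod 2), δ) (0, 0) := by
  have h := moveA (Matrix.diagonal δ) (Matrix.diagonal_transpose δ) 0 δ
  rwa [Matrix.mulVec_zero, add_zero, dv_diagonal, addself] at h

/-- the odd-weight case: clear `δ`, then clear `ε` -/
lemma redA (ε δ : Fin g → ZMod 2) (h1 : ∑ i, ε i = 1) (h0 : ∑ i, ε i * δ i = 0) :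
    Rel (ε, δ) ((0 : Fin g → ZMod 2), 0) := by
  set s := Matrix.vecMulVec δ ε + Matrix.vecMulVec ε δ with hsdef
  have hs : sᵀ = s := by
    ext i j
    show s j i = s i j
    simp only [hsdef, Matrix.add_apply, Matrix.vecMulVec_apply]
    ring
  have hmul : s.mulVec ε = δ := by
    rw [hsdef, Matrix.add_mulVec, vecMulVec_mulVec', vecMulVec_mulVec']
    have e1 : ∑ k, ε k * ε k = 1 := by
      rw [← h1]; congr 1; funext k
      exact (by decide : ∀ a : ZMod 2, a * a = a) _
    have e2 : ∑ k, δ k * ε k = 0 := by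
      rw [← h0]; congr 1; funext k; ring
    rw [e1, e2, one_smul, zero_smul, add_zero]
  have hdv : dv s = 0 := by
    funext i
    show δ i * ε i + ε i * δ i = 0
    rw [mul_comm (δ i)]
    exact (by decide : ∀ a : ZMod 2, a + a = 0) _
  have h := moveA s hs ε δ
  rw [hmul, hdv, add_zero, addself] at h
  exact h.trans (red_right_zero ε)

/-- flip one coordinate of `ε` at a position where `δ` vanishes -/
lemma flip_eps (ε δ : Fin g → ZMod 2) (j : Fin g) :
    Rel (ε, δ) (ε + Pi.single j (δ j) + Pi.single j 1, δ) := by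
  have h := moveB (Matrix.diagonal (Pi.single j 1 : Fin g → ZMod 2))
    (Matrix.diagonal_transpose _) ε δ
  rwa [diagonal_single_mulVec, dv_diagonal] at h

/-- flip one coordinate of `δ` -/
lemma flip_del (ε δ : Fin g → ZMod 2) (j : Fin g) :
    Rel (ε, δ) (ε, δ + Pi.single j (ε j) + Pi.single j 1) := by
  have h := moveA (Matrix.diagonal (Pi.single j 1 : Fin g → ZMod 2))
    (Matrix.diagonal_transpose _) ε δ
  rwa [diagonal_single_mulVec, dv_diagonal] at h

/-- even-weight case -/
lemma redB (ε δ : Fin g → ZMod 2) (h1 : ∑ i, ε i = 0) (h0 : ∑ i, ε i * δ i = 0) :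
    Rel (ε, δ) ((0 : Fin g → ZMod 2), 0) := by
  classical
  -- step 1 : if some δ j = 0 and ε ≠ 0 we can flip ε j and land in redA
  have key : ∀ δ' : Fin g → ZMod 2, (∑ i, ε i * δ' i = 0) → (∃ j, δ' j = 0) →
      Rel (ε, δ') ((0 : Fin g → ZMod 2), 0) := by
    intro δ' hp ⟨j, hj⟩
    have h := flip_eps ε δ' j
    rw [hj] at h
    set ε' := ε + Pi.single j (0 : ZMod 2) + Pi.single j 1 with hε'
    have hee : ε' = ε + Pi.single j 1 := by rw [hε', Pi.single_zero, add_zero]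
    have hsum : ∑ i, ε' i = 1 := by
      rw [hee]
      have : ∑ i, (ε + (Pi.single j 1 : Fin g → ZMod 2)) i
          = ∑ i, ε i + ∑ i, (Pi.single j 1 : Fin g → ZMod 2) i := by
        rw [← Finset.sum_add_distrib]; rfl
      rw [this, h1, Finset.sum_pi_single']
      simp
    have hpair : ∑ i, ε' i * δ' i = 0 := by
      rw [hee]
      have : ∑ i, (ε + (Pi.single j 1 : Fin g → ZMod 2)) i * δ' i
          = ∑ i, ε i * δ' i + ∑ i, (Pi.single j 1 : Fin g → ZMod 2) i * δ' i := by
        rw [← Finset.sum_add_distrib]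
        congr 1; funext i
        show (ε i + _) * δ' i = _
        ring
      rw [this, hp, sum_single_mul, hj, add_zero]
    exact h.trans (redA ε' δ' hsum hpair)
  by_cases hez : ε = 0
  · subst hez; exact red_left_zero δ
  by_cases hdz : ∃ j, δ j = 0
  · exact key δ h0 hdz
  push_neg at hdz
  have hdone : ∀ j, δ j = 1 := by
    intro j
    rcases (by decide : ∀ a : ZMod 2, a = 0 ∨ a = 1) (δ j) with h | hh
    · exact absurd h (hdz j)
    · exact hh
  by_cases hej : ∃ j, ε j = 0
  · obtain ⟨j, hj⟩ := hej
    have h := flip_del ε δ j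
    rw [hj, Pi.single_zero, add_zero] at h
    set δ' := δ + Pi.single j 1 with hδ'
    have hδ'j : δ' j = 0 := by
      show δ j + (Pi.single j 1 : Fin g → ZMod 2) j = 0
      rw [hdone j, Pi.single_eq_same]
      decide
    have hpair : ∑ i, ε i * δ' i = 0 := by
      have : ∑ i, ε i * δ' i = ∑ i, ε i * δ i + ∑ i, ε i * (Pi.single j 1 : Fin g → ZMod 2) i := by
        rw [← Finset.sum_add_distrib]
        congr 1; funext i
        show ε i * (δ i + _) = _
        ring
      rw [this, h0, sum_mul_single, hj, add_zero]
    exact h.trans (key δ' hpair ⟨j, hδ'j⟩)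
  · -- ε is all ones, δ is all ones
    push_neg at hej
    have heone : ∀ j, ε j = 1 := by
      intro j
      rcases (by decide : ∀ a : ZMod 2, a = 0 ∨ a = 1) (ε j) with h | hh
      · exact absurd h (hej j)
      · exact hh
    -- g ≥ 2
    have hg2 : 2 ≤ g := by
      by_contra hg
      push_neg at hg
      interval_cases g
      · exact hez (funext fun i => i.elim0)
      · have : ∑ i, ε i = ε 0 := by simp [Fin.sum_univ_one]
        rw [this, heone 0] at h1
        exact one_ne_zero h1
    set j0 : Fin g := ⟨0, by omega⟩
    set j1 : Fin g := ⟨1, by omega⟩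
    have hjne : j0 ≠ j1 := by
      intro hcon
      have := congrArg Fin.val hcon
      simp [j0, j1] at this
    set s := Matrix.vecMulVec (Pi.single j0 1 : Fin g → ZMod 2) (Pi.single j1 1)
        + Matrix.vecMulVec (Pi.single j1 1 : Fin g → ZMod 2) (Pi.single j0 1) with hsdef
    have hs : sᵀ = s := by
      ext i j
      show s j i = s i j
      simp only [hsdef, Matrix.add_apply, Matrix.vecMulVec_apply]
      ring
    have hmul : s.mulVec ε = Pi.single j0 1 + Pi.single j1 1 := by
      rw [hsdef, Matrix.add_mulVec, vecMulVec_mulVec', vecMulVec_mulVec',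
        sum_single_mul, sum_single_mul, heone, heone, one_smul, one_smul]
    have hdv : dv s = 0 := by
      funext i
      show (Pi.single j0 1 : Fin g → ZMod 2) i * (Pi.single j1 1 : Fin g → ZMod 2) i
          + (Pi.single j1 1 : Fin g → ZMod 2) i * (Pi.single j0 1 : Fin g → ZMod 2) i = 0
      rw [mul_comm ((Pi.single j0 1 : Fin g → ZMod 2) i)]
      exact (by decide : ∀ a : ZMod 2, a + a = 0) _
    have h := moveA s hs ε δ
    rw [hmul, hdv, add_zero] at h
    set δ' := δ + (Pi.single j0 1 + Pi.single j1 1) with hδ'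
    have hδ'j : δ' j0 = 0 := by
      show δ j0 + ((Pi.single j0 1 : Fin g → ZMod 2) j0 + (Pi.single j1 1 : Fin g → ZMod 2) j0) = 0
      rw [hdone j0, Pi.single_eq_same, Pi.single_eq_of_ne hjne]
      decide
    have hpair : ∑ i, ε i * δ' i = 0 := by
      have expand : ∑ i, ε i * δ' i = ∑ i, ε i * δ i
          + (∑ i, ε i * (Pi.single j0 1 : Fin g → ZMod 2) i
            + ∑ i, ε i * (Pi.single j1 1 : Fin g → ZMod 2) i) := by
        rw [← Finset.sum_add_distrib, ← Finset.sum_add_distrib]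
        congr 1; funext i
        show ε i * (δ i + (_ + _)) = _
        ring
      rw [expand, h0, sum_mul_single, sum_mul_single, heone, heone, zero_add]
      decide
    exact h.trans (key δ' hpair ⟨j0, hδ'j⟩)

/-- every even characteristic is equivalent to zero -/
lemma red_main (ε δ : Fin g → ZMod 2) (h0 : ∑ i, ε i * δ i = 0) :
    Rel (ε, δ) ((0 : Fin g → ZMod 2), 0) := by
  rcases (by decide : ∀ a : ZMod 2, a = 0 ∨ a = 1) (∑ i, ε i) with h | h
  · exact redB ε δ h h0
  · exact redA ε δ h h0

end ThetaChar

/-- `Sp(2g, ℤ)` acts transitively on the set of even characteristics. -/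
theorem symplectic_transitive_on_even_characteristics {g : ℕ}
    (ε δ ε' δ' : Fin g → ZMod 2)
    (h : ∑ i, ε i * δ i = 0) (h' : ∑ i, ε' i * δ' i = 0) :
    ∃ M ∈ Matrix.symplecticGroup (Fin g) ℤ,
      charAction M ε δ = (ε', δ') := by
  have h1 := ThetaChar.red_main ε δ h
  have h2 := ThetaChar.red_main ε' δ' h'
  obtain ⟨M, hM, e⟩ := h1.trans h2.symm
  exact ⟨M, hM, e⟩
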